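/- (Lemma 1) For any submodule A of a Hermitian Λ-module H, the double annihilator satisfies Ann(Ann(A)) = Ā, the closure of A in H. -/

import Mathlib

open scoped TensorProduct

/-- A sesquilinear form on `H`: `Λ`-linear in the first variable,
conjugate-linear in the second. -/
abbrev SesqForm (Λ : Type*) [CommRing Λ] [StarRing Λ]
    (H : Type*) [AddCommGroup H] [Module Λ H] :=
  H →ₗ[Λ] H →ₛₗ[starRingEnd Λ] Λ

namespace SesqForm

variable {Λ : Type*} [CommRing Λ] [StarRing Λ]
variable {H : Type*} [AddCommGroup H] [Module Λ H]

/-- The skew-hermitian condition `ω(x,y) = -conj ω(y,x)`. -/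
def IsSkew (ω : SesqForm Λ H) : Prop := ∀ x y : H, ω x y = - star (ω y x)

/-- Non-degeneracy of a sesquilinear form. -/
def Nondeg (ω : SesqForm Λ H) : Prop := ∀ x : H, (∀ y : H, ω x y = 0) → x = 0

/-- The annihilator of a submodule with respect to a sesquilinear form. -/
def ann (ω : SesqForm Λ H) (A : Submodule Λ H) : Submodule Λ H where
  carrier := {x | ∀ a ∈ A, ω x a = 0}
  zero_mem' := by intro a _; simp
  add_mem' := by
    intro x y hx hy a ha
    simp [hx a ha, hy a ha]
  smul_mem' := by
    intro c x hx a ha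
    simp [hx a ha]

end SesqForm

/-- The closure (saturation) of a submodule: elements a nonzero multiple of
which lies in the submodule. -/
def Submodule.clos {Λ : Type*} [CommRing Λ] [IsDomain Λ] {H : Type*} [AddCommGroup H] [Module Λ H]
    (A : Submodule Λ H) : Submodule Λ H where
  carrier := {x | ∃ c : Λ, c ≠ 0 ∧ c • x ∈ A}
  zero_mem' := ⟨1, one_ne_zero, by simp⟩
  add_mem' := by
    rintro x y ⟨c, hc, hx⟩ ⟨d, hd, hy⟩
    refine ⟨c * d, mul_ne_zero hc hd, ?_⟩
    rw [smul_add]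
    refine Submodule.add_mem _ ?_ ?_
    · rw [mul_comm, mul_smul]; exact Submodule.smul_mem _ d hx
    · rw [mul_smul]; exact Submodule.smul_mem _ c hy
  smul_mem' := by
    rintro c x ⟨d, hd, hx⟩
    exact ⟨d, hd, by rw [smul_comm]; exact Submodule.smul_mem _ c hx⟩

/-- A submodule is Lagrangian when its closure equals its annihilator. -/
def SesqForm.IsLagrangian {Λ : Type*} [CommRing Λ] [IsDomain Λ] [StarRing Λ]
    {H : Type*} [AddCommGroup H] [Module Λ H]
    (ω : SesqForm Λ H) (A : Submodule Λ H) : Prop :=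
  A.clos = ω.ann A

/-- The direct sum of two sesquilinear forms. -/
def prodForm {Λ : Type*} [CommRing Λ] [StarRing Λ]
    {H₁ H₂ : Type*} [AddCommGroup H₁] [Module Λ H₁] [AddCommGroup H₂] [Module Λ H₂]
    (ω₁ : SesqForm Λ H₁) (ω₂ : SesqForm Λ H₂) : SesqForm Λ (H₁ × H₂) :=
  LinearMap.mk₂'ₛₗ (RingHom.id Λ) (starRingEnd Λ)
    (fun x y => ω₁ x.1 y.1 + ω₂ x.2 y.2)
    (by intro x x' y; simp [add_add_add_comm])
    (by intro c x y; simp [smul_eq_mul, mul_add])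
    (by intro x y y'; simp [add_add_add_comm])
    (by intro c x y; simp [smul_eq_mul, mul_add])

/-- The composition of two relations (submodules of products). -/
def relComp {Λ : Type*} [CommRing Λ]
    {H₁ H₂ H₃ : Type*} [AddCommGroup H₁] [Module Λ H₁]
    [AddCommGroup H₂] [Module Λ H₂] [AddCommGroup H₃] [Module Λ H₃]
    (N₁ : Submodule Λ (H₁ × H₂)) (N₂ : Submodule Λ (H₂ × H₃)) :
    Submodule Λ (H₁ × H₃) where
  carrier := {p | ∃ h₂ : H₂, (p.1, h₂) ∈ N₁ ∧ (h₂, p.2) ∈ N₂}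
  zero_mem' := ⟨0, N₁.zero_mem, N₂.zero_mem⟩
  add_mem' := by
    rintro p q ⟨a, ha1, ha2⟩ ⟨b, hb1, hb2⟩
    exact ⟨a + b, N₁.add_mem ha1 hb1, N₂.add_mem ha2 hb2⟩
  smul_mem' := by
    rintro c p ⟨a, ha1, ha2⟩
    exact ⟨c • a, N₁.smul_mem c ha1, N₂.smul_mem c ha2⟩


set_option linter.unusedSectionVars false

section Aux
variable {Λ : Type*} [CommRing Λ] [StarRing Λ]
variable {H : Type*} [AddCommGroup H] [Module Λ H]

/-- The Λ-linear functional `y ↦ ω y a`. -/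
def sphi (ω : SesqForm Λ H) (a : H) : H →ₗ[Λ] Λ where
  toFun y := ω y a
  map_add' y z := by simp
  map_smul' c y := by simp

@[simp] lemma sphi_apply (ω : SesqForm Λ H) (a y : H) : sphi ω a y = ω y a := rfl

lemma sphi_add (ω : SesqForm Λ H) (a b : H) : sphi ω (a + b) = sphi ω a + sphi ω b := by
  ext y; simp

lemma sphi_smul (ω : SesqForm Λ H) (c : Λ) (a : H) :
    sphi ω (c • a) = star c • sphi ω a := by
  ext y
  simp [LinearMap.map_smulₛₗ, starRingEnd_apply]

end Aux

section AuxQ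
variable {Λ : Type*} [CommRing Λ] [IsDomain Λ] [StarRing Λ]
variable {H : Type*} [AddCommGroup H] [Module Λ H]

local notation "Q" => FractionRing Λ

/-- The canonical map `H → Q ⊗ H`. -/
noncomputable def iotaQ (Λ : Type*) [CommRing Λ] [IsDomain Λ] (H : Type*) [AddCommGroup H]
    [Module Λ H] : H →ₗ[Λ] (FractionRing Λ ⊗[Λ] H) :=
  TensorProduct.mk Λ (FractionRing Λ) H 1

instance : IsLocalizedModule (nonZeroDivisors Λ) (iotaQ Λ H) :=
  (isLocalizedModule_iff_isBaseChange (nonZeroDivisors Λ) Q _).mpr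
    (TensorProduct.isBaseChange Λ H Q)

/-- Base change of functionals. -/
noncomputable def PsiQ (f : H →ₗ[Λ] Λ) : (Q ⊗[Λ] H) →ₗ[Q] Q :=
  ((Algebra.linearMap Λ Q) ∘ₗ f).liftBaseChange Q

lemma PsiQ_iotaQ (f : H →ₗ[Λ] Λ) (h : H) :
    PsiQ f (iotaQ Λ H h) = algebraMap Λ Q (f h) := by
  simp [PsiQ, iotaQ]

lemma extQ {F G : (Q ⊗[Λ] H) →ₗ[Q] Q} (hFG : ∀ h : H, F (iotaQ Λ H h) = G (iotaQ Λ H h)) :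
    F = G := by
  refine LinearMap.ext fun v => ?_
  induction v using TensorProduct.induction_on with
  | zero => simp
  | tmul q h =>
      have : q ⊗ₜ[Λ] h = q • ((1 : Q) ⊗ₜ[Λ] h) := by
        rw [TensorProduct.smul_tmul']; simp
      rw [this, map_smul, map_smul]
      exact congrArg (q • ·) (hFG h)
  | add v w hv hw => simp [hv, hw]

lemma PsiQ_add (f g : H →ₗ[Λ] Λ) : PsiQ (f + g) = PsiQ f + PsiQ g := by
  apply extQ; intro h; simp [PsiQ_iotaQ]

lemma PsiQ_smul (c : Λ) (f : H →ₗ[Λ] Λ) :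
    PsiQ (c • f) = algebraMap Λ Q c • PsiQ f := by
  apply extQ; intro h
  simp [PsiQ_iotaQ, Algebra.smul_def]

lemma PsiQ_zero : PsiQ (0 : H →ₗ[Λ] Λ) = 0 := by
  apply extQ; intro h; simp [PsiQ_iotaQ]

end AuxQ

section AuxQ2
variable {Λ : Type*} [CommRing Λ] [IsDomain Λ] [StarRing Λ]
variable {H : Type*} [AddCommGroup H] [Module Λ H]

local notation "Q" => FractionRing Λ

lemma alg_smul_iotaQ (c : Λ) (h : H) :
    algebraMap Λ Q c • iotaQ Λ H h = iotaQ Λ H (c • h) := by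
  rw [algebraMap_smul, map_smul]

lemma mem_span_iotaQ {s : Set H} {v : Q ⊗[Λ] H}
    (hv : v ∈ Submodule.span Q (iotaQ Λ H '' s)) :
    ∃ c : Λ, c ≠ 0 ∧ ∃ h ∈ Submodule.span Λ s, algebraMap Λ Q c • v = iotaQ Λ H h := by
  induction hv using Submodule.span_induction with
  | mem x hx =>
      obtain ⟨h, hh, rfl⟩ := hx
      exact ⟨1, one_ne_zero, h, Submodule.subset_span hh, by simp⟩
  | zero => exact ⟨1, one_ne_zero, 0, Submodule.zero_mem _, by simp⟩
  | add x y _ _ ihx ihy =>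
      obtain ⟨c, hc, h, hh, eq1⟩ := ihx
      obtain ⟨d, hd, k, hk, eq2⟩ := ihy
      refine ⟨c * d, mul_ne_zero hc hd, d • h + c • k,
        Submodule.add_mem _ (Submodule.smul_mem _ _ hh) (Submodule.smul_mem _ _ hk), ?_⟩
      rw [map_add, map_mul, smul_add, ← alg_smul_iotaQ, ← alg_smul_iotaQ, ← eq1, ← eq2,
        smul_smul, smul_smul, mul_comm (algebraMap Λ Q c) (algebraMap Λ Q d)]
  | smul q x _ ih =>
      obtain ⟨c, hc, h, hh, eq1⟩ := ih
      obtain ⟨⟨a, y⟩, rfl⟩ := IsLocalization.mk'_surjective (nonZeroDivisors Λ) q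
      have hy : (y : Λ) ≠ 0 := nonZeroDivisors.coe_ne_zero y
      refine ⟨(y : Λ) * c, mul_ne_zero hy hc, a • h,
        Submodule.smul_mem _ _ hh, ?_⟩
      have hspec : IsLocalization.mk' Q a y * algebraMap Λ Q (y : Λ) = algebraMap Λ Q a :=
        IsLocalization.mk'_spec Q a y
      rw [← alg_smul_iotaQ, ← eq1, map_mul, smul_smul, smul_smul]
      congr 1
      rw [mul_right_comm, mul_comm ((algebraMap Λ Q) (y : Λ)), hspec]

lemma sphi_zero (ω : SesqForm Λ H) : sphi ω 0 = 0 := by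
  ext y; simp

lemma sphi_mem_span (ω : SesqForm Λ H) {s : Set H} {h : H}
    (hh : h ∈ Submodule.span Λ s) :
    sphi ω h ∈ Submodule.span Λ (sphi ω '' s) := by
  induction hh using Submodule.span_induction with
  | mem x hx => exact Submodule.subset_span ⟨x, hx, rfl⟩
  | zero => rw [sphi_zero]; exact Submodule.zero_mem _
  | add x y _ _ ihx ihy => rw [sphi_add]; exact Submodule.add_mem _ ihx ihy
  | smul c x _ ih => rw [sphi_smul]; exact Submodule.smul_mem _ _ ih

lemma PsiQ_mem_span {s : Set (H →ₗ[Λ] Λ)} {f : H →ₗ[Λ] Λ}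
    (hf : f ∈ Submodule.span Λ s) :
    PsiQ f ∈ Submodule.span Q ((fun g : H →ₗ[Λ] Λ => PsiQ g) '' s) := by
  induction hf using Submodule.span_induction with
  | mem x hx => exact Submodule.subset_span ⟨x, hx, rfl⟩
  | zero => rw [PsiQ_zero]; exact Submodule.zero_mem _
  | add x y _ _ ihx ihy => rw [PsiQ_add]; exact Submodule.add_mem _ ihx ihy
  | smul c x _ ih => rw [PsiQ_smul]; exact Submodule.smul_mem _ _ ih

end AuxQ2

section Main
variable {Λ : Type*} [CommRing Λ] [IsDomain Λ] [StarRing Λ]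
variable {H : Type*} [AddCommGroup H] [Module Λ H]

local notation "Q" => FractionRing Λ

set_option maxHeartbeats 1000000 in
set_option synthInstance.maxHeartbeats 200000 in
theorem ann_ann_le_clos' [Module.Finite Λ H]
    (ω : SesqForm Λ H) (hskew : ω.IsSkew) (hnd : ω.Nondeg)
    (A : Submodule Λ H) :
    ω.ann (ω.ann A) ≤ A.clos := by
  classical
  have halg : Function.Injective (algebraMap Λ Q) := IsFractionRing.injective Λ Q
  have halg0 : ∀ c : Λ, c ≠ 0 → algebraMap Λ Q c ≠ 0 := by
    intro c hc h0
    exact hc (halg (by simpa using h0))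
  -- torsion-free
  have htf : ∀ (c : Λ) (h : H), c ≠ 0 → c • h = 0 → h = 0 := by
    intro c h hc h0
    apply hnd
    intro y
    have : ω (c • h) y = 0 := by rw [h0]; simp
    rw [map_smul] at this
    simp only [LinearMap.smul_apply, smul_eq_mul] at this
    rcases mul_eq_zero.mp this with h | h
    · exact absurd h hc
    · exact h
  have hinj : Function.Injective (iotaQ Λ H) := by
    intro a b hab
    have h0 : (iotaQ Λ H) (a - b) = 0 := by rw [map_sub, hab, sub_self]
    rw [IsLocalizedModule.eq_zero_iff (nonZeroDivisors Λ)] at h0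
    obtain ⟨s, hs⟩ := h0
    have := htf (s : Λ) (a - b) (nonZeroDivisors.coe_ne_zero s) (by rwa [Submonoid.smul_def] at hs)
    exact sub_eq_zero.mp this
  have hflip : ∀ z : H, (∀ h : H, ω h z = 0) → z = 0 := by
    intro z hz
    apply hnd
    intro y
    rw [hskew]
    rw [hz y]
    simp
  haveI hfdV : Module.Finite Q (Q ⊗[Λ] H) := inferInstance
  haveI hfdD : Module.Finite Q (Module.Dual Q (Q ⊗[Λ] H)) := inferInstance
  intro x hx
  -- the main subspaces
  set W : Submodule Q (Q ⊗[Λ] H) := Submodule.span Q ((iotaQ Λ H) '' (A : Set H)) with hW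
  set Wann : Submodule Q (Q ⊗[Λ] H) := Submodule.span Q ((iotaQ Λ H) '' ((ω.ann A) : Set H)) with hWann
  set T : Submodule Q (Module.Dual Q (Q ⊗[Λ] H)) :=
    Submodule.span Q ((fun a : H => PsiQ (sphi ω a)) '' (A : Set H)) with hT
  set T₂ : Submodule Q (Module.Dual Q (Q ⊗[Λ] H)) :=
    Submodule.span Q ((fun y : H => PsiQ (sphi ω y)) '' ((ω.ann A) : Set H)) with hT₂
  -- (F1) Wann = dualCoannihilator T
  have hF1 : Wann = T.dualCoannihilator := by
    apply le_antisymm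
    · rw [hWann, Submodule.span_le]
      rintro _ ⟨y, hy, rfl⟩
      rw [SetLike.mem_coe, Submodule.mem_dualCoannihilator]
      intro φ hφ
      have hker : T ≤ LinearMap.ker (LinearMap.applyₗ ((iotaQ Λ H) y)) := by
        rw [hT, Submodule.span_le]
        rintro _ ⟨a, ha, rfl⟩
        rw [SetLike.mem_coe, LinearMap.mem_ker]
        show PsiQ (sphi ω a) ((iotaQ Λ H) y) = 0
        rw [PsiQ_iotaQ, sphi_apply, hy a ha, map_zero]
      exact hker hφ
    · intro v hv
      obtain ⟨⟨h, s⟩, hs⟩ := IsLocalizedModule.surj (nonZeroDivisors Λ) (iotaQ Λ H) v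
      have hhann : h ∈ ω.ann A := by
        intro a ha
        have hφT : PsiQ (sphi ω a) ∈ T := by
          rw [hT]; exact Submodule.subset_span ⟨a, ha, rfl⟩
        have h0 : PsiQ (sphi ω a) v = 0 := (Submodule.mem_dualCoannihilator v).mp hv _ hφT
        have h1 : PsiQ (sphi ω a) ((iotaQ Λ H) h) = 0 := by
          rw [← hs, Submonoid.smul_def, LinearMap.map_smul_of_tower, h0, smul_zero]
        rw [PsiQ_iotaQ, sphi_apply] at h1
        exact halg (by simpa using h1)
      have hsv : algebraMap Λ Q (s : Λ) • v = (iotaQ Λ H) h := by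
        rw [algebraMap_smul, ← Submonoid.smul_def]; exact hs
      have hne : algebraMap Λ Q (s : Λ) ≠ 0 := halg0 _ (nonZeroDivisors.coe_ne_zero s)
      have hveq : v = (algebraMap Λ Q (s : Λ))⁻¹ • (iotaQ Λ H) h := by
        rw [← hsv, smul_smul, inv_mul_cancel₀ hne, one_smul]
      rw [hveq, hWann]
      exact Submodule.smul_mem _ _ (Submodule.subset_span ⟨h, hhann, rfl⟩)
  -- (F5)
  have hF5 : W ≤ T₂.dualCoannihilator := by
    rw [hW, Submodule.span_le]
    rintro _ ⟨a, ha, rfl⟩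
    rw [SetLike.mem_coe, Submodule.mem_dualCoannihilator]
    intro φ hφ
    have hker : T₂ ≤ LinearMap.ker (LinearMap.applyₗ ((iotaQ Λ H) a)) := by
      rw [hT₂, Submodule.span_le]
      rintro _ ⟨y, hy, rfl⟩
      rw [SetLike.mem_coe, LinearMap.mem_ker]
      show PsiQ (sphi ω y) ((iotaQ Λ H) a) = 0
      have hya : ω a y = 0 := by rw [hskew, hy a ha]; simp
      rw [PsiQ_iotaQ, sphi_apply, hya, map_zero]
    exact hker hφ
  -- (F2)
  have hF2 : Module.finrank Q Wann ≤ Module.finrank Q T₂ := by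
    obtain ⟨b, hbsub, hbspan, hbli⟩ :=
      exists_linearIndependent Q ((iotaQ Λ H) '' ((ω.ann A) : Set H))
    haveI : Fintype b := (hbli.setFinite).fintype
    have hpre : ∀ v : b, ∃ y : H, y ∈ ω.ann A ∧ (iotaQ Λ H) y = (v : Q ⊗[Λ] H) := by
      intro v
      obtain ⟨y, hy, hyv⟩ := hbsub v.2
      exact ⟨y, hy, hyv⟩
    choose f hfmem hfι using hpre
    have hcard : Module.finrank Q Wann = b.toFinset.card := by
      rw [hWann, ← hbspan]; exact finrank_span_set_eq_card hbli
    have hgli : LinearIndependent Q (fun v : b => PsiQ (sphi ω (f v))) := by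
      rw [Fintype.linearIndependent_iff]
      intro q hq v
      obtain ⟨dd, hdd⟩ :=
        IsLocalization.exist_integer_multiples (nonZeroDivisors Λ) Finset.univ q
      have hint : ∀ i : b, ∃ c : Λ, algebraMap Λ Q c = (dd : Λ) • q i := by
        intro i
        exact hdd i (Finset.mem_univ i)
      choose cc hcc using hint
      set z : H := ∑ v : b, star (cc v) • f v with hz
      have hωz : ∀ h : H, ω h z = 0 := by
        intro h
        have hsum : ω h z = ∑ v : b, cc v * ω h (f v) := by
          rw [hz, map_sum]
          refine Finset.sum_congr rfl fun v _ => ?_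
          rw [(ω h).map_smulₛₗ]
          simp [starRingEnd_apply, star_star]
        have happ : (∑ v : b, q v • PsiQ (sphi ω (f v))) ((iotaQ Λ H) h) = 0 := by
          rw [hq]; simp
        rw [LinearMap.sum_apply] at happ
        simp only [LinearMap.smul_apply, PsiQ_iotaQ, sphi_apply, smul_eq_mul] at happ
        have hd0 : algebraMap Λ Q (∑ v : b, cc v * ω h (f v)) = 0 := by
          rw [map_sum]
          have hterm : ∀ v : b, algebraMap Λ Q (cc v * ω h (f v)) =
              algebraMap Λ Q (dd : Λ) * (q v * algebraMap Λ Q (ω h (f v))) := by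
            intro v
            rw [map_mul, hcc v, Algebra.smul_def]
            ring
          rw [Finset.sum_congr rfl fun v _ => hterm v, ← Finset.mul_sum, happ, mul_zero]
        rw [hsum]
        exact halg (by simpa using hd0)
      have hz0 : z = 0 := hflip z hωz
      have hcomb : ∑ v : b, algebraMap Λ Q (star (cc v)) • (v : Q ⊗[Λ] H) = 0 := by
        have hterm : ∀ v : b, algebraMap Λ Q (star (cc v)) • (v : Q ⊗[Λ] H) =
            (iotaQ Λ H) (star (cc v) • f v) := by
          intro v; rw [← hfι v, alg_smul_iotaQ]
        rw [Finset.sum_congr rfl fun v _ => hterm v, ← map_sum, ← hz, hz0, map_zero]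
      have hcoef := Fintype.linearIndependent_iff.mp hbli _ hcomb v
      have hccv : cc v = 0 := by
        have h1 : star (cc v) = 0 := halg (by simpa using hcoef)
        simpa [star_eq_zero] using h1
      have hq0 : (dd : Λ) • q v = 0 := by rw [← hcc v, hccv, map_zero]
      rw [Algebra.smul_def] at hq0
      rcases mul_eq_zero.mp hq0 with h | h
      · exact absurd h (halg0 _ (nonZeroDivisors.coe_ne_zero dd))
      · exact h
    have hsub : Submodule.span Q (Set.range fun v : b => PsiQ (sphi ω (f v))) ≤ T₂ := by
      rw [Submodule.span_le, hT₂]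
      rintro _ ⟨v, rfl⟩
      exact Submodule.subset_span ⟨f v, hfmem v, rfl⟩
    calc Module.finrank Q Wann = b.toFinset.card := hcard
      _ = Fintype.card b := Set.toFinset_card b
      _ = Module.finrank Q
            (Submodule.span Q (Set.range fun v : b => PsiQ (sphi ω (f v)))) :=
          (finrank_span_eq_card hgli).symm
      _ ≤ Module.finrank Q T₂ := Submodule.finrank_mono hsub
  -- (F3)
  have hF3 : Module.finrank Q T ≤ Module.finrank Q W := by
    obtain ⟨b', hbsub, hbspan, hbli⟩ :=
      exists_linearIndependent Q ((iotaQ Λ H) '' (A : Set H))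
    haveI : Fintype b' := (hbli.setFinite).fintype
    have hpre : ∀ v : b', ∃ a : H, a ∈ A ∧ (iotaQ Λ H) a = (v : Q ⊗[Λ] H) := by
      intro v
      obtain ⟨a, ha, hav⟩ := hbsub v.2
      exact ⟨a, ha, hav⟩
    choose f hfmem hfι using hpre
    have hWcard : Module.finrank Q W = b'.toFinset.card := by
      rw [hW, ← hbspan]; exact finrank_span_set_eq_card hbli
    have hTle : T ≤ Submodule.span Q (Set.range fun v : b' => PsiQ (sphi ω (f v))) := by
      rw [hT, Submodule.span_le]
      rintro _ ⟨a, ha, rfl⟩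
      have hmem : (iotaQ Λ H) a ∈ Submodule.span Q ((iotaQ Λ H) '' Set.range f) := by
        have h1 : (iotaQ Λ H) a ∈ Submodule.span Q b' := by
          rw [hbspan]; exact Submodule.subset_span ⟨a, ha, rfl⟩
        refine Submodule.span_mono ?_ h1
        intro v hv
        exact ⟨f ⟨v, hv⟩, ⟨⟨v, hv⟩, rfl⟩, hfι ⟨v, hv⟩⟩
      obtain ⟨d, hd, h, hhspan, heq⟩ := mem_span_iotaQ hmem
      have hda : d • a = h := hinj (by rw [alg_smul_iotaQ] at heq; exact heq)
      have hmem2 : PsiQ (sphi ω h) ∈ Submodule.span Q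
          ((fun g : H →ₗ[Λ] Λ => PsiQ g) '' (sphi ω '' Set.range f)) :=
        PsiQ_mem_span (sphi_mem_span ω hhspan)
      have hseteq : ((fun g : H →ₗ[Λ] Λ => PsiQ g) '' (sphi ω '' Set.range f)) =
          Set.range (fun v : b' => PsiQ (sphi ω (f v))) := by
        rw [Set.image_image]
        exact (Set.range_comp (fun x : H => PsiQ (sphi ω x)) f).symm
      rw [hseteq] at hmem2
      have hkey : PsiQ (sphi ω h) = algebraMap Λ Q (star d) • PsiQ (sphi ω a) := by
        rw [← hda, sphi_smul, PsiQ_smul]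
      have hstar : algebraMap Λ Q (star d) ≠ 0 :=
        halg0 _ (fun h0 => hd (star_eq_zero.mp h0))
      have hfin : PsiQ (sphi ω a) = (algebraMap Λ Q (star d))⁻¹ • PsiQ (sphi ω h) := by
        rw [hkey, smul_smul, inv_mul_cancel₀ hstar, one_smul]
      rw [SetLike.mem_coe]
      show PsiQ (sphi ω a) ∈ Submodule.span Q (Set.range fun v : b' => PsiQ (sphi ω (f v)))
      rw [hfin]
      exact Submodule.smul_mem _ _ hmem2
    calc Module.finrank Q T
        ≤ Module.finrank Q
            (Submodule.span Q (Set.range fun v : b' => PsiQ (sphi ω (f v)))) :=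
          Submodule.finrank_mono hTle
      _ ≤ Fintype.card b' := by
          simpa [Set.finrank] using
            finrank_range_le_card (fun v : b' => PsiQ (sphi ω (f v)))
      _ = b'.toFinset.card := (Set.toFinset_card b').symm
      _ = Module.finrank Q W := hWcard.symm
  -- conclude W = dualCoannihilator T₂
  have e1 := Subspace.finrank_add_finrank_dualCoannihilator_eq T
  have e2 := Subspace.finrank_add_finrank_dualCoannihilator_eq T₂
  rw [← hF1] at e1
  have hWeq : W = T₂.dualCoannihilator := by
    apply Submodule.eq_of_le_of_finrank_le hF5
    omega
  -- x lands in the coannihilator of T₂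
  have hxmem : (iotaQ Λ H) x ∈ T₂.dualCoannihilator := by
    rw [Submodule.mem_dualCoannihilator]
    intro φ hφ
    have hker : T₂ ≤ LinearMap.ker (LinearMap.applyₗ ((iotaQ Λ H) x)) := by
      rw [hT₂, Submodule.span_le]
      rintro _ ⟨y, hy, rfl⟩
      rw [SetLike.mem_coe, LinearMap.mem_ker]
      show PsiQ (sphi ω y) ((iotaQ Λ H) x) = 0
      rw [PsiQ_iotaQ, sphi_apply, hx y hy, map_zero]
    exact hker hφ
  rw [← hWeq] at hxmem
  obtain ⟨c, hc, h, hh, heq⟩ := mem_span_iotaQ hxmem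
  rw [Submodule.span_eq] at hh
  refine ⟨c, hc, ?_⟩
  have : (iotaQ Λ H) (c • x) = (iotaQ Λ H) h := by rw [alg_smul_iotaQ] at heq; exact heq
  rwa [hinj this]

end Main

/-- Lemma 1: the double annihilator of a submodule equals its closure. -/
theorem ann_ann_eq_clos
    {Λ : Type*} [CommRing Λ] [IsDomain Λ] [StarRing Λ]
    {H : Type*} [AddCommGroup H] [Module Λ H] [Module.Finite Λ H]
    (ω : SesqForm Λ H) (hskew : ω.IsSkew) (hnd : ω.Nondeg)
    (A : Submodule Λ H) :
    ω.ann (ω.ann A) = A.clos := by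
  apply le_antisymm
  · exact ann_ann_le_clos' ω hskew hnd A
  · rintro x ⟨c, hc, hcx⟩ y hy
    have h1 : ω y (c • x) = 0 := hy _ hcx
    rw [(ω y).map_smulₛₗ] at h1
    have h2 : ω y x = 0 := by
      rcases mul_eq_zero.mp h1 with h | h
      · exact absurd (star_eq_zero.mp h) hc
      · exact h
    rw [hskew, h2]
    simp
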